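/- For z in the open unit disc, the matrix Ω_z = (i/(1-z²))·[[1+z², 2z],[2z, 1+z²]] is symmetric and has positive-definite imaginary part, i.e., Ω_z lies in the Siegel upper half space 𝕊₂. -/

import Mathlib

open Matrix

/-- The period matrix `Ω_z = (i/(1-z²))·[[1+z², 2z],[2z, 1+z²]]`. -/
noncomputable def OmegaZ (z : ℂ) : Matrix (Fin 2) (Fin 2) ℂ :=
  (Complex.I / (1 - z ^ 2)) • !![1 + z ^ 2, 2 * z; 2 * z, 1 + z ^ 2]

/-- For `|z| < 1`, the matrix `Ω_z` is symmetric with positive-definite imaginary part,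
i.e. `Ω_z` lies in the Siegel upper half space `𝕊₂`. -/
theorem OmegaZ_mem_Siegel (z : ℂ) (hz : ‖z‖ < 1) :
    (OmegaZ z)ᵀ = OmegaZ z ∧ ((OmegaZ z).map Complex.im).PosDef := by
  have hz1 : (1 : ℂ) - z ≠ 0 := by
    intro h
    have : z = 1 := by linear_combination -h
    simp [this] at hz
  have hz2 : (1 : ℂ) + z ≠ 0 := by
    intro h
    have : z = -1 := by linear_combination h
    simp [this] at hz
  have hzsq : (1 : ℂ) - z ^ 2 ≠ 0 := by
    intro h
    apply hz1
    rcases mul_eq_zero.mp (show ((1:ℂ) - z) * (1 + z) = 0 by linear_combination h) with h' | h'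
    · exact h'
    · exact absurd h' hz2
  have hnorm : z.re ^ 2 + z.im ^ 2 < 1 := by
    have h1 : Complex.normSq z < 1 := by
      have := Complex.sq_norm z
      nlinarith [norm_nonneg z]
    rw [Complex.normSq_apply] at h1
    nlinarith
  set a : ℝ := (Complex.I / (1 - z ^ 2) * (1 + z ^ 2)).im with ha_def
  set b : ℝ := (Complex.I / (1 - z ^ 2) * (2 * z)).im with hb_def
  have key1 : Complex.I / (1 - z ^ 2) * (1 + z ^ 2) + Complex.I / (1 - z ^ 2) * (2 * z)
      = Complex.I * ((1 + z) / (1 - z)) := by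
    field_simp
    ring
  have key2 : Complex.I / (1 - z ^ 2) * (1 + z ^ 2) - Complex.I / (1 - z ^ 2) * (2 * z)
      = Complex.I * ((1 - z) / (1 + z)) := by
    field_simp
    ring
  have hre1 : (((1 : ℂ) + z) / (1 - z)).re
      = (1 - (z.re ^ 2 + z.im ^ 2)) / Complex.normSq (1 - z) := by
    rw [Complex.div_re]
    simp [Complex.normSq_apply]
    ring
  have hre2 : (((1 : ℂ) - z) / (1 + z)).re
      = (1 - (z.re ^ 2 + z.im ^ 2)) / Complex.normSq (1 + z) := by
    rw [Complex.div_re]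
    simp [Complex.normSq_apply]
    ring
  have hab : 0 < a + b := by
    have : a + b = (Complex.I * ((1 + z) / (1 - z))).im := by
      rw [ha_def, hb_def, ← Complex.add_im, key1]
    rw [this, Complex.mul_im]
    simp only [Complex.I_re, Complex.I_im, zero_mul, one_mul, zero_add]
    rw [hre1]
    apply div_pos (by linarith) (Complex.normSq_pos.mpr hz1)
  have hab' : 0 < a - b := by
    have : a - b = (Complex.I * ((1 - z) / (1 + z))).im := by
      rw [ha_def, hb_def, ← Complex.sub_im, key2]
    rw [this, Complex.mul_im]
    simp only [Complex.I_re, Complex.I_im, zero_mul, one_mul, zero_add]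
    rw [hre2]
    apply div_pos (by linarith) (Complex.normSq_pos.mpr hz2)
  have hmap : (OmegaZ z).map Complex.im = !![a, b; b, a] := by
    ext i j
    fin_cases i <;> fin_cases j <;>
      simp [OmegaZ, ha_def, hb_def]
  constructor
  · ext i j
    fin_cases i <;> fin_cases j <;> simp [OmegaZ]
  · rw [hmap]
    constructor
    · ext i j
      fin_cases i <;> fin_cases j <;> simp [Matrix.conjTranspose_apply]
    · intro v hv
      have hv' : v 0 ≠ 0 ∨ v 1 ≠ 0 := by
        by_contra h
        push_neg at h
        exact hv (by ext i; fin_cases i <;> simp [h.1, h.2])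
      simp [Finsupp.sum_fintype, Fin.sum_univ_two]
      rcases eq_or_ne (v 0 + v 1) 0 with hs | hs
      · have hd : v 0 - v 1 ≠ 0 := by
          rcases hv' with h | h <;> intro hd <;> apply h <;> linarith
        nlinarith [mul_pos hab' (sq_pos_of_ne_zero hd), mul_nonneg hab.le (sq_nonneg (v 0 + v 1))]
      · nlinarith [mul_pos hab (sq_pos_of_ne_zero hs), mul_nonneg hab'.le (sq_nonneg (v 0 - v 1))]
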